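/- If buf and buf' are reorder buffers with equal refined low buffer-projections, and ρ, ρ' are register maps with equal refined low-projections, and the two buffers are both non-speculative, with aplsan(buf,ρ)(pc) and aplsan(buf',ρ')(pc) both defined, pc having a public-labeled value in ρ and ρ', and every resolved assignment to pc in buf and buf' having security level ⊥, then aplsan(buf,ρ)(pc) = aplsan(buf',ρ')(pc) as labeled values. -/

import Mathlib

inductive Lvl
  | low
  | high
  deriving DecidableEq

/-- Possibly-undefined labeled values: `SVals ∪ {⊥val}`. -/
inductive MVal (V : Type*)
  | defn (v : V) (s : Lvl)
  | undef

/-- Codomain of projections: labeled values, the undefined symbol `⊥val`, or the dummy `★`. -/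
inductive PVal (V : Type*)
  | val (v : V) (s : Lvl)
  | undef
  | dummy

/-- Low-projection: `(v,⊥) ↦ (v,⊥)`, `(v,⊤) ↦ ⊥val`, `⊥val ↦ ⊥val`. -/
def lowProj {V : Type*} : MVal V → PVal V
  | .defn v .low => .val v .low
  | .defn _ .high => .undef
  | .undef => .undef

/-- Refined low-projection: `(v,⊥) ↦ (v,⊥)`, `(v,⊤) ↦ ★`, `⊥val ↦ ⊥val`. -/
def rlowProj {V : Type*} : MVal V → PVal V
  | .defn v .low => .val v .low
  | .defn _ .high => .dummy
  | .undef => .undef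

/-- ROB expressions (including the special symbols `⊥val` and `★` that
projections may substitute for secret literals). -/
inductive Expr (V R : Type*)
  | lit (v : V) (s : Lvl)
  | undef
  | dummy
  | reg (r : R)
  | bin (e₁ e₂ : Expr V R)

inductive Instr (V R : Type*)
  | mov (r : R) (e : Expr V R)
  | load (x : R) (e : Expr V R)
  | store (ea ev : Expr V R)

inductive Tag (L : Type*)
  | loc (l : L)
  | eps

/-- A tagged ROB instruction `inst @ T`. -/
structure TInstr (V R L : Type*) where
  instr : Instr V R
  tag : Tag L

/-- Low buffer-projection on expressions: replaces secret literals by `⊥val`. -/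
def bufProjE {V R : Type*} : Expr V R → Expr V R
  | .lit v .low => .lit v .low
  | .lit _ .high => .undef
  | .undef => .undef
  | .dummy => .dummy
  | .reg r => .reg r
  | .bin e₁ e₂ => .bin (bufProjE e₁) (bufProjE e₂)

/-- Refined low buffer-projection on expressions: replaces secret literals by `★`. -/
def rbufProjE {V R : Type*} : Expr V R → Expr V R
  | .lit v .low => .lit v .low
  | .lit _ .high => .dummy
  | .undef => .undef
  | .dummy => .dummy
  | .reg r => .reg r
  | .bin e₁ e₂ => .bin (rbufProjE e₁) (rbufProjE e₂)

/-- Structural extension of an expression projection to instructions. -/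
def projI {V R : Type*} (f : Expr V R → Expr V R) : Instr V R → Instr V R
  | .mov r e => .mov r (f e)
  | .load x e => .load x (f e)
  | .store ea ev => .store (f ea) (f ev)

/-- Low buffer-projection (pointwise, preserving tags). -/
def bufProj {V R L : Type*} (buf : List (TInstr V R L)) : List (TInstr V R L) :=
  buf.map fun ti => ⟨projI bufProjE ti.instr, ti.tag⟩

/-- Refined low buffer-projection (pointwise, preserving tags). -/
def rbufProj {V R L : Type*} (buf : List (TInstr V R L)) : List (TInstr V R L) :=
  buf.map fun ti => ⟨projI rbufProjE ti.instr, ti.tag⟩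

/-- The apply function `apl`. -/
def apl {V R L : Type*} [DecidableEq R] :
    List (TInstr V R L) → (R → MVal V) → R → MVal V
  | [], ρ => ρ
  | ⟨.mov r (.lit v s), _⟩ :: b, ρ => apl b (Function.update ρ r (MVal.defn v s))
  | ⟨.mov r .undef, _⟩ :: b, ρ => apl b (Function.update ρ r MVal.undef)
  | ⟨.mov r .dummy, _⟩ :: b, ρ => apl b (Function.update ρ r MVal.undef)
  | ⟨.mov r (.reg _), _⟩ :: b, ρ => apl b (Function.update ρ r MVal.undef)
  | ⟨.mov r (.bin _ _), _⟩ :: b, ρ => apl b (Function.update ρ r MVal.undef)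
  | ⟨.load x _, _⟩ :: b, ρ => apl b (Function.update ρ x MVal.undef)
  | ⟨.store _ _, _⟩ :: b, ρ => apl b ρ

def Tag.isEps {L : Type*} : Tag L → Bool
  | .eps => true
  | .loc _ => false

/-- Low-projection within `MVal`: secret values are sanitized to `⊥val`. -/
def lowProjM {V : Type*} : MVal V → MVal V
  | .defn v .low => .defn v .low
  | .defn _ .high => .undef
  | .undef => .undef

/-- The sanitizing apply function: behaves like `apl` during sequential
execution, and sanitizes secrets during speculative execution. -/
def aplsan {V R L : Type*} [DecidableEq R] (buf : List (TInstr V R L)) (ρ : R → MVal V) :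
    R → MVal V :=
  if buf.all (fun ti => ti.tag.isEps) then apl buf ρ
  else fun r => lowProjM (apl buf ρ r)

/-- One-step register-map update of `apl`. -/
def updI {V R : Type*} [DecidableEq R] : Instr V R → (R → MVal V) → (R → MVal V)
  | .mov r (.lit v s), ρ => Function.update ρ r (MVal.defn v s)
  | .mov r .undef, ρ => Function.update ρ r MVal.undef
  | .mov r .dummy, ρ => Function.update ρ r MVal.undef
  | .mov r (.reg _), ρ => Function.update ρ r MVal.undef
  | .mov r (.bin _ _), ρ => Function.update ρ r MVal.undef
  | .load x _, ρ => Function.update ρ x MVal.undef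
  | .store _ _, ρ => ρ

lemma apl_cons {V R L : Type*} [DecidableEq R] (i : Instr V R) (t : Tag L)
    (b : List (TInstr V R L)) (ρ : R → MVal V) :
    apl (⟨i, t⟩ :: b) ρ = apl b (updI i ρ) := by
  cases i with
  | mov r e => cases e <;> rfl
  | load x e => rfl
  | store ea ev => rfl

lemma key {V R L : Type*} [DecidableEq R] (pc : R) :
    ∀ (buf buf' : List (TInstr V R L)) (ρ ρ' : R → MVal V),
    rbufProj buf = rbufProj buf' →
    rlowProj (ρ pc) = rlowProj (ρ' pc) →
    (∀ (v : V) (s : Lvl) (T : Tag L),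
       (⟨Instr.mov pc (Expr.lit v s), T⟩ : TInstr V R L) ∈ buf → s = Lvl.low) →
    (∀ (v : V) (s : Lvl) (T : Tag L),
       (⟨Instr.mov pc (Expr.lit v s), T⟩ : TInstr V R L) ∈ buf' → s = Lvl.low) →
    rlowProj (apl buf ρ pc) = rlowProj (apl buf' ρ' pc) := by
  intro buf
  induction buf with
  | nil =>
    intro buf' ρ ρ' hb hr _ _
    cases buf' with
    | nil => simpa [apl] using hr
    | cons ti b' => simp [rbufProj] at hb
  | cons ti b ih =>
    intro buf' ρ ρ' hb hr hl hl'
    cases buf' with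
    | nil => simp [rbufProj] at hb
    | cons ti' b' =>
      obtain ⟨i, t⟩ := ti
      obtain ⟨i', t'⟩ := ti'
      simp only [rbufProj, List.map_cons, List.cons.injEq, TInstr.mk.injEq] at hb
      obtain ⟨⟨hi, ht⟩, hrest⟩ := hb
      rw [apl_cons, apl_cons]
      refine ih b' (updI i ρ) (updI i' ρ') hrest ?_
        (fun v s T hm => hl v s T (List.mem_cons_of_mem _ hm))
        (fun v s T hm => hl' v s T (List.mem_cons_of_mem _ hm))
      cases i with
      | mov r e =>
        cases i' with
        | mov r' e' =>
          simp only [projI, Instr.mov.injEq] at hi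
          obtain ⟨rfl, he⟩ := hi
          by_cases hrpc : r = pc
          · subst hrpc
            cases e with
            | lit v s =>
              have hs : s = Lvl.low := hl v s t List.mem_cons_self
              subst hs
              cases e' with
              | lit v' s' =>
                have hs' : s' = Lvl.low := hl' v' s' t' List.mem_cons_self
                subst hs'
                simp only [rbufProjE, Expr.lit.injEq] at he
                obtain ⟨rfl, -⟩ := he
                simp [updI]
              | undef => simp [rbufProjE] at he
              | dummy => simp [rbufProjE] at he
              | reg => simp [rbufProjE] at he
              | bin => simp [rbufProjE] at he
            | undef =>
              cases e' with
              | lit v' s' => cases s' <;> simp [rbufProjE] at he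
              | undef => simp [updI]
              | dummy => simp [rbufProjE] at he
              | reg => simp [rbufProjE] at he
              | bin => simp [rbufProjE] at he
            | dummy =>
              cases e' with
              | lit v' s' =>
                have hs' : s' = Lvl.low := hl' v' s' t' List.mem_cons_self
                subst hs'
                simp [rbufProjE] at he
              | undef => simp [rbufProjE] at he
              | dummy => simp [updI]
              | reg => simp [rbufProjE] at he
              | bin => simp [rbufProjE] at he
            | reg r₁ =>
              cases e' with
              | lit v' s' => cases s' <;> simp [rbufProjE] at he
              | undef => simp [rbufProjE] at he
              | dummy => simp [rbufProjE] at he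
              | reg => simp [updI]
              | bin => simp [rbufProjE] at he
            | bin e₁ e₂ =>
              cases e' with
              | lit v' s' => cases s' <;> simp [rbufProjE] at he
              | undef => simp [rbufProjE] at he
              | dummy => simp [rbufProjE] at he
              | reg => simp [rbufProjE] at he
              | bin => simp [updI]
          · have h1 : updI (Instr.mov r e) ρ pc = ρ pc := by
              cases e <;> simp [updI, Function.update_of_ne (Ne.symm hrpc)]
            have h2 : updI (Instr.mov r e') ρ' pc = ρ' pc := by
              cases e' <;> simp [updI, Function.update_of_ne (Ne.symm hrpc)]
            rw [h1, h2]; exact hr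
        | load x' e' => simp [projI] at hi
        | store ea' ev' => simp [projI] at hi
      | load x e =>
        cases i' with
        | mov r' e' => simp [projI] at hi
        | load x' e' =>
          simp only [projI, Instr.load.injEq] at hi
          obtain ⟨rfl, -⟩ := hi
          by_cases hxpc : x = pc
          · subst hxpc; simp [updI]
          · simp [updI, Function.update_of_ne (Ne.symm hxpc), hr]
        | store ea' ev' => simp [projI] at hi
      | store ea ev =>
        cases i' with
        | mov r' e' => simp [projI] at hi
        | load x' e' => simp [projI] at hi
        | store ea' ev' => simpa [updI] using hr

lemma not_high {V R L : Type*} [DecidableEq R] (pc : R) :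
    ∀ (buf : List (TInstr V R L)) (ρ : R → MVal V),
    (∀ (v : V) (s : Lvl) (T : Tag L),
       (⟨Instr.mov pc (Expr.lit v s), T⟩ : TInstr V R L) ∈ buf → s = Lvl.low) →
    (∀ v : V, ρ pc ≠ MVal.defn v Lvl.high) →
    ∀ v : V, apl buf ρ pc ≠ MVal.defn v Lvl.high := by
  intro buf
  induction buf with
  | nil => intro ρ _ h v; exact h v
  | cons ti b ih =>
    intro ρ hl h v
    obtain ⟨i, t⟩ := ti
    rw [apl_cons]
    refine ih (updI i ρ) (fun v s T hm => hl v s T (List.mem_cons_of_mem _ hm)) ?_ v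
    intro w
    cases i with
    | mov r e =>
      by_cases hrpc : r = pc
      · subst hrpc
        cases e with
        | lit v₁ s₁ =>
          have hs : s₁ = Lvl.low := hl v₁ s₁ t List.mem_cons_self
          subst hs
          simp [updI]
        | undef => simp [updI]
        | dummy => simp [updI]
        | reg => simp [updI]
        | bin => simp [updI]
      · cases e <;> simp [updI, Function.update_of_ne (Ne.symm hrpc)] <;> exact h w
    | load x e =>
      by_cases hxpc : x = pc
      · subst hxpc; simp [updI]
      · simp [updI, Function.update_of_ne (Ne.symm hxpc)]; exact h w
    | store ea ev => simpa [updI] using h w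

/-- Low-equivalent non-speculative buffers and register maps evaluate `pc`
to the same (defined, public) labeled value under `aplsan`. -/
theorem aplsan_pc_eq {V R L : Type*} [DecidableEq R] (pc : R)
    (ρ ρ' : R → MVal V) (buf buf' : List (TInstr V R L))
    (hbuf : rbufProj buf = rbufProj buf')
    (hreg : ∀ r, rlowProj (ρ r) = rlowProj (ρ' r))
    (hseq : ∀ ti ∈ buf, ti.tag = Tag.eps)
    (hseq' : ∀ ti ∈ buf', ti.tag = Tag.eps)
    (hdef : aplsan buf ρ pc ≠ MVal.undef)
    (hdef' : aplsan buf' ρ' pc ≠ MVal.undef)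
    (hpc : ∃ v, ρ pc = MVal.defn v Lvl.low)
    (hpc' : ∃ v, ρ' pc = MVal.defn v Lvl.low)
    (hlowbuf : ∀ (v : V) (s : Lvl) (T : Tag L),
      (⟨Instr.mov pc (Expr.lit v s), T⟩ : TInstr V R L) ∈ buf → s = Lvl.low)
    (hlowbuf' : ∀ (v : V) (s : Lvl) (T : Tag L),
      (⟨Instr.mov pc (Expr.lit v s), T⟩ : TInstr V R L) ∈ buf' → s = Lvl.low) :
    aplsan buf ρ pc = aplsan buf' ρ' pc := by
  have hall : buf.all (fun ti => ti.tag.isEps) = true := by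
    rw [List.all_eq_true]; intro ti hti; rw [hseq ti hti]; rfl
  have hall' : buf'.all (fun ti => ti.tag.isEps) = true := by
    rw [List.all_eq_true]; intro ti hti; rw [hseq' ti hti]; rfl
  rw [aplsan, if_pos hall] at hdef ⊢
  rw [aplsan, if_pos hall'] at hdef' ⊢
  have hk := key pc buf buf' ρ ρ' hbuf (hreg pc) hlowbuf hlowbuf'
  obtain ⟨v, hv⟩ := hpc
  obtain ⟨v', hv'⟩ := hpc'
  have hnh : ∀ w : V, apl buf ρ pc ≠ MVal.defn w Lvl.high := by
    refine not_high pc buf ρ hlowbuf (fun w hw => ?_)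
    rw [hv] at hw; cases hw
  have hnh' : ∀ w : V, apl buf' ρ' pc ≠ MVal.defn w Lvl.high := by
    refine not_high pc buf' ρ' hlowbuf' (fun w hw => ?_)
    rw [hv'] at hw; cases hw
  cases hx : apl buf ρ pc with
  | undef => exact absurd hx hdef
  | defn w s =>
    cases s with
    | high => exact absurd hx (hnh w)
    | low =>
      cases hy : apl buf' ρ' pc with
      | undef => exact absurd hy hdef'
      | defn w' s' =>
        cases s' with
        | high => exact absurd hy (hnh' w')
        | low =>
          rw [hx, hy] at hk
          simp only [rlowProj, PVal.val.injEq] at hk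
          rw [hk.1]
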